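/- Let (X,d) be a metric space, μ a Borel measure on X, n > 0, and c₄ > 0, and suppose μ(B(x,r)) ≤ c₄ r^n for every x ∈ X and r > 0. Then for every N > n there exists a constant C''_N (depending only on N, n, c₄) such that ∫_X (1 + d(x,z)/t)^{-N} (1 + d(z,y)/t)^{-N} dμ(z) ≤ C''_N t^n (1 + d(x,y)/t)^{-N} for all x, y ∈ X and t > 0. -/

import Mathlib

open MeasureTheory

lemma aux_pow_swap (k : ℕ) (a : ℝ) : ((2:ℝ)^k) ^ a = ((2:ℝ) ^ a) ^ k := by
  rw [← Real.rpow_natCast 2 k, ← Real.rpow_natCast ((2:ℝ)^a) k,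
    ← Real.rpow_mul (by norm_num), ← Real.rpow_mul (by norm_num), mul_comm]

lemma aux_integral {X : Type} [MetricSpace X] [MeasurableSpace X] [BorelSpace X]
    (μ : Measure X) (n c₄ N : ℝ) (hn : 0 < n) (hc₄ : 0 < c₄) (hN : n < N)
    (hμ : ∀ (x : X) (r : ℝ), 0 < r → μ (Metric.ball x r) ≤ ENNReal.ofReal (c₄ * r ^ n))
    (x : X) (t : ℝ) (ht : 0 < t) :
    ∫⁻ z, ENNReal.ofReal ((1 + dist x z / t) ^ (-N)) ∂μ
      ≤ ENNReal.ofReal ((2 ^ N * c₄ / (1 - 2 ^ (n - N))) * t ^ n) := by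
  have hN0 : (0:ℝ) < N := hn.trans hN
  set r : ℝ := (2:ℝ) ^ (n - N) with hrdef
  have hr1 : r < 1 := Real.rpow_lt_one_of_one_lt_of_neg one_lt_two (by linarith)
  have hr0 : 0 ≤ r := Real.rpow_nonneg (by norm_num) _
  set F : ℕ → X → ENNReal := fun k z =>
    (Metric.ball x ((2:ℝ)^k * t)).indicator
      (fun _ => ENNReal.ofReal ((2:ℝ) ^ N * ((2:ℝ)^k) ^ (-N))) z with hF
  have hpt : ∀ z, ENNReal.ofReal ((1 + dist x z / t) ^ (-N)) ≤ ∑' k : ℕ, F k z := by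
    intro z
    have hd : 0 ≤ dist x z / t := div_nonneg dist_nonneg ht.le
    have hex : ∃ k : ℕ, dist x z / t < 2 ^ k := pow_unbounded_of_one_lt _ one_lt_two
    obtain ⟨k, hks, hmin⟩ : ∃ k, dist x z / t < 2 ^ k ∧ ∀ m < k, ¬ dist x z / t < 2 ^ m :=
      ⟨Nat.find hex, Nat.find_spec hex, fun m hm => Nat.find_min hex hm⟩
    refine le_trans ?_ (ENNReal.le_tsum k)
    have hmem : z ∈ Metric.ball x ((2:ℝ)^k * t) := by
      rw [Metric.mem_ball, dist_comm]
      calc dist x z = (dist x z / t) * t := by field_simp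
        _ < 2 ^ k * t := by exact mul_lt_mul_of_pos_right hks ht
    rw [hF]
    simp only [Set.indicator_of_mem hmem]
    apply ENNReal.ofReal_le_ofReal
    have h2k : (2:ℝ) ^ k ≤ 2 * (1 + dist x z / t) := by
      cases' k with m
      · simpa using by linarith
      · have hm : ¬ (dist x z / t < 2 ^ m) := hmin m (Nat.lt_succ_self m)
        push_neg at hm
        have : (2:ℝ) ^ (m+1) = 2 * 2 ^ m := by ring
        rw [this]
        nlinarith
    have hhalf : (2:ℝ)^k / 2 ≤ 1 + dist x z / t := by linarith
    have hpos : (0:ℝ) < (2:ℝ)^k / 2 := by positivity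
    calc (1 + dist x z / t) ^ (-N) ≤ ((2:ℝ)^k / 2) ^ (-N) :=
          Real.rpow_le_rpow_of_nonpos hpos hhalf (by linarith)
      _ = (2:ℝ) ^ N * ((2:ℝ)^k) ^ (-N) := by
          rw [Real.div_rpow (by positivity) (by norm_num),
            Real.rpow_neg (show (0:ℝ) ≤ 2 by norm_num)]
          field_simp
  calc ∫⁻ z, ENNReal.ofReal ((1 + dist x z / t) ^ (-N)) ∂μ
      ≤ ∫⁻ z, ∑' k : ℕ, F k z ∂μ := lintegral_mono hpt
    _ = ∑' k : ℕ, ∫⁻ z, F k z ∂μ := lintegral_tsum (fun k => by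
        exact ((measurable_const.indicator Metric.isOpen_ball.measurableSet)).aemeasurable)
    _ ≤ ∑' k : ℕ, ENNReal.ofReal ((2:ℝ)^N * c₄ * t^n * r^k) := by
        refine ENNReal.tsum_le_tsum fun k => ?_
        rw [hF]
        rw [lintegral_indicator Metric.isOpen_ball.measurableSet, setLIntegral_const]
        have hball := hμ x ((2:ℝ)^k * t) (by positivity)
        calc ENNReal.ofReal ((2:ℝ)^N * ((2:ℝ)^k)^(-N)) * μ (Metric.ball x ((2:ℝ)^k * t))
            ≤ ENNReal.ofReal ((2:ℝ)^N * ((2:ℝ)^k)^(-N)) *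
              ENNReal.ofReal (c₄ * ((2:ℝ)^k * t) ^ n) := mul_le_mul_right hball _
          _ = ENNReal.ofReal ((2:ℝ)^N * c₄ * t^n * r^k) := by
              rw [← ENNReal.ofReal_mul (by positivity)]
              congr 1
              rw [Real.mul_rpow (by positivity) ht.le]
              have h1 : ((2:ℝ)^k)^(-N) * ((2:ℝ)^k)^n = r ^ k := by
                rw [← Real.rpow_add (by positivity), hrdef, aux_pow_swap]
                ring_nf
              rw [← h1]; ring
    _ = ENNReal.ofReal ((2 ^ N * c₄ / (1 - r)) * t ^ n) := by
        rw [← ENNReal.ofReal_tsum_of_nonneg (fun k => by positivity)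
          ((summable_geometric_of_lt_one hr0 hr1).mul_left _)]
        congr 1
        rw [tsum_mul_left, tsum_geometric_of_lt_one hr0 hr1]
        field_simp

lemma half_bound {D s N : ℝ} (hD : 0 ≤ D) (_hs : 0 ≤ s) (hN : 0 < N) (h : D / 2 ≤ s) :
    (1 + s) ^ (-N) ≤ 2 ^ N * (1 + D) ^ (-N) := by
  have h1 : (1 + D) / 2 ≤ 1 + s := by linarith
  calc (1 + s) ^ (-N) ≤ ((1 + D) / 2) ^ (-N) :=
        Real.rpow_le_rpow_of_nonpos (by linarith) h1 (by linarith)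
    _ = 2 ^ N * (1 + D) ^ (-N) := by
        rw [Real.div_rpow (by linarith) (by norm_num),
          Real.rpow_neg (show (0:ℝ) ≤ 2 by norm_num)]
        field_simp

theorem stmt10 (n : ℝ) (hn : 0 < n) (c₄ : ℝ) (hc₄ : 0 < c₄) (N : ℝ) (hN : n < N) :
    ∃ C'' : ℝ, 0 < C'' ∧
      ∀ (X : Type) [MetricSpace X] [MeasurableSpace X] [BorelSpace X]
        (μ : Measure X),
        (∀ (x : X) (r : ℝ), 0 < r → μ (Metric.ball x r) ≤ ENNReal.ofReal (c₄ * r ^ n)) →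
        ∀ (x y : X) (t : ℝ), 0 < t →
          ∫⁻ z, ENNReal.ofReal
              ((1 + dist x z / t) ^ (-N) * (1 + dist z y / t) ^ (-N)) ∂μ
            ≤ ENNReal.ofReal (C'' * t ^ n * (1 + dist x y / t) ^ (-N)) := by
  have hN0 : (0:ℝ) < N := hn.trans hN
  have hr1 : (2:ℝ) ^ (n - N) < 1 := Real.rpow_lt_one_of_one_lt_of_neg one_lt_two (by linarith)
  set C₁ : ℝ := 2 ^ N * c₄ / (1 - 2 ^ (n - N)) with hC₁
  have hC₁pos : 0 < C₁ := div_pos (mul_pos (Real.rpow_pos_of_pos two_pos N) hc₄) (by linarith)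
  refine ⟨2 ^ (N + 1) * C₁, by positivity, ?_⟩
  intro X _ _ _ μ hμ x y t ht
  have h2Npos : (0:ℝ) < 2 ^ N := Real.rpow_pos_of_pos two_pos N
  set D : ℝ := dist x y / t with hD
  have hD0 : 0 ≤ D := div_nonneg dist_nonneg ht.le
  have key : ∀ z : X,
      (1 + dist x z / t) ^ (-N) * (1 + dist z y / t) ^ (-N) ≤
        2 ^ N * (1 + D) ^ (-N) * (1 + dist z y / t) ^ (-N)
        + 2 ^ N * (1 + D) ^ (-N) * (1 + dist x z / t) ^ (-N) := by
    intro z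
    have hA : (0:ℝ) ≤ dist x z / t := div_nonneg dist_nonneg ht.le
    have hB : (0:ℝ) ≤ dist z y / t := div_nonneg dist_nonneg ht.le
    have htri : D ≤ dist x z / t + dist z y / t := by
      rw [hD, ← add_div]
      gcongr
      exact dist_triangle x z y
    have hnn1 : (0:ℝ) ≤ (1 + dist x z / t) ^ (-N) := Real.rpow_nonneg (by linarith) _
    have hnn2 : (0:ℝ) ≤ (1 + dist z y / t) ^ (-N) := Real.rpow_nonneg (by linarith) _
    have hnnD : (0:ℝ) ≤ 2 ^ N * (1 + D) ^ (-N) := by positivity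
    rcases le_or_gt (D / 2) (dist x z / t) with hc | hc
    · have h1 := half_bound hD0 hA hN0 hc
      have := mul_le_mul_of_nonneg_right h1 hnn2
      nlinarith [mul_nonneg hnnD hnn1]
    · have hc' : D / 2 ≤ dist z y / t := by linarith
      have h1 := half_bound hD0 hB hN0 hc'
      have := mul_le_mul_of_nonneg_right h1 hnn1
      nlinarith [mul_nonneg hnnD hnn2]
  have m2 : Measurable fun z : X => ENNReal.ofReal ((1 + dist z y / t) ^ (-N)) := by
    apply Measurable.ennreal_ofReal
    apply Continuous.measurable
    apply Continuous.rpow_const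
    · exact continuous_const.add ((continuous_id.dist continuous_const).div_const t)
    · intro z
      left
      have : (0:ℝ) ≤ dist z y / t := div_nonneg dist_nonneg ht.le
      positivity
  have I1 : ∫⁻ z, ENNReal.ofReal ((1 + dist x z / t) ^ (-N)) ∂μ
      ≤ ENNReal.ofReal (C₁ * t ^ n) :=
    aux_integral μ n c₄ N hn hc₄ hN hμ x t ht
  have I2 : ∫⁻ z, ENNReal.ofReal ((1 + dist z y / t) ^ (-N)) ∂μ
      ≤ ENNReal.ofReal (C₁ * t ^ n) := by
    have := aux_integral μ n c₄ N hn hc₄ hN hμ y t ht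
    simpa [dist_comm] using this
  have hnnD : (0:ℝ) ≤ 2 ^ N * (1 + D) ^ (-N) := by positivity
  calc ∫⁻ z, ENNReal.ofReal ((1 + dist x z / t) ^ (-N) * (1 + dist z y / t) ^ (-N)) ∂μ
      ≤ ∫⁻ z, (ENNReal.ofReal (2 ^ N * (1 + D) ^ (-N)) *
            ENNReal.ofReal ((1 + dist z y / t) ^ (-N))
          + ENNReal.ofReal (2 ^ N * (1 + D) ^ (-N)) *
            ENNReal.ofReal ((1 + dist x z / t) ^ (-N))) ∂μ := by
        apply lintegral_mono
        intro z
        have h := ENNReal.ofReal_le_ofReal (key z)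
        rw [ENNReal.ofReal_add (by positivity) (by positivity),
          ENNReal.ofReal_mul hnnD, ENNReal.ofReal_mul hnnD] at h
        exact h
    _ = ENNReal.ofReal (2 ^ N * (1 + D) ^ (-N)) *
          ∫⁻ z, ENNReal.ofReal ((1 + dist z y / t) ^ (-N)) ∂μ
        + ENNReal.ofReal (2 ^ N * (1 + D) ^ (-N)) *
          ∫⁻ z, ENNReal.ofReal ((1 + dist x z / t) ^ (-N)) ∂μ := by
        rw [lintegral_add_left (m2.const_mul _),
          lintegral_const_mul' _ _ ENNReal.ofReal_ne_top,
          lintegral_const_mul' _ _ ENNReal.ofReal_ne_top]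
    _ ≤ ENNReal.ofReal (2 ^ N * (1 + D) ^ (-N)) * ENNReal.ofReal (C₁ * t ^ n)
        + ENNReal.ofReal (2 ^ N * (1 + D) ^ (-N)) * ENNReal.ofReal (C₁ * t ^ n) :=
        add_le_add (mul_le_mul_right I2 _) (mul_le_mul_right I1 _)
    _ = ENNReal.ofReal (2 ^ (N + 1) * C₁ * t ^ n * (1 + D) ^ (-N)) := by
        rw [← ENNReal.ofReal_mul hnnD, ← ENNReal.ofReal_add (by positivity) (by positivity)]
        congr 1
        rw [Real.rpow_add_one (by norm_num : (2:ℝ) ≠ 0)]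
        ring
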